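/- For k ∈ ℂ, let η_k be the totally antisymmetric array determined by η_k(1,2,3) = 1 and η_k(4,5,6) = k (all entries not obtained from these two by permutations being zero). Then η_k is effective and q(η_k) = 2k·S, where S is the symmetric block matrix [[0, I₃],[I₃, 0]]. In particular, for every k ≠ 0 the matrix q(η_k) has rank 6, and all the arrays η_k with k ≠ 0 have proportional KLR contractions: these arrays constitute the fiber of the projectivized moment map through the generic Monge–Ampère equation det(u_{ij}) = const, and the fiber is compactified by the two points k = 0 and k = ∞ lying in the Lagrangian Grassmannian. -/
import Mathlib


open scoped Matrix

noncomputable section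

/-- The matrix `J = [[0, I₃], [-I₃, 0]]` of the standard symplectic form on `ℂ⁶`. -/
def J : Matrix (Fin 6) (Fin 6) ℂ :=
  Matrix.of fun i j => if (i : ℕ) + 3 = (j : ℕ) then 1 else if (j : ℕ) + 3 = (i : ℕ) then -1 else 0

/-- The matrix `W = -J`, so `W(i, i+3) = -1` and `W(i+3, i) = 1` for `i = 1, 2, 3`. -/
def W : Matrix (Fin 6) (Fin 6) ℂ := -J

/-- A totally antisymmetric array `η : {1,…,6}³ → ℂ`: it changes sign under the
transposition of any two of its three arguments. -/
def IsAlt (η : Fin 6 → Fin 6 → Fin 6 → ℂ) : Prop :=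
  (∀ i j k, η j i k = -η i j k) ∧ (∀ i j k, η i k j = -η i j k) ∧
    (∀ i j k, η k j i = -η i j k)

/-- An array `η` is effective if `Σ_{i,j} W(i,j) · η(i,j,k) = 0` for every `k`. -/
def IsEff (η : Fin 6 → Fin 6 → Fin 6 → ℂ) : Prop :=
  ∀ k, (∑ i, ∑ j, W i j * η i j k) = 0

/-- The KLR contraction of a `3`-form `η`: the symmetric `6 × 6` matrix with entries
`q(η)(a,b) = Σ_{i,j,h,k} η(a,i,j) · η(b,h,k) · W(i,h) · W(j,k)`. -/
def klr (η : Fin 6 → Fin 6 → Fin 6 → ℂ) : Matrix (Fin 6) (Fin 6) ℂ :=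
  Matrix.of fun a b => ∑ i, ∑ j, ∑ h, ∑ k, η a i j * η b h k * W i h * W j k

/-- The standard symplectic form `ω(u, v) = uᵀ J v` on `ℂ⁶`. -/
def omg (u v : Fin 6 → ℂ) : ℂ := ∑ i, ∑ j, u i * J i j * v j

/-- The Plücker array of vectors `v₁, v₂, v₃ ∈ ℂ⁶`: its `(i,j,k)` entry is the
determinant of the `3 × 3` matrix whose `m`-th row is `((v_m)_i, (v_m)_j, (v_m)_k)`. -/
def plk (v : Fin 3 → Fin 6 → ℂ) : Fin 6 → Fin 6 → Fin 6 → ℂ :=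
  fun i j k => Matrix.det (Matrix.of fun m n => v m (![i, j, k] n))

/-- The `m`-th standard basis vector of `ℂ⁶`. -/
def stdv (m : Fin 6) : Fin 6 → ℂ := fun i => if i = m then 1 else 0

/-- The totally antisymmetric array `η_k` determined by `η_k(1,2,3) = 1` and
`η_k(4,5,6) = k` (all entries not obtained from these two by permutations being
zero): it is the sum of the Plücker array of `e₁, e₂, e₃` and `k` times the Plücker
array of `e₄, e₅, e₆`. -/
def etaO (k : ℂ) : Fin 6 → Fin 6 → Fin 6 → ℂ :=
  fun i j l => plk ![stdv 0, stdv 1, stdv 2] i j l + k * plk ![stdv 3, stdv 4, stdv 5] i j l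

/-- The symmetric block matrix `S = [[0, I₃], [I₃, 0]]`. -/
def Sblk : Matrix (Fin 6) (Fin 6) ℂ :=
  Matrix.of fun i j => if (i : ℕ) + 3 = (j : ℕ) ∨ (j : ℕ) + 3 = (i : ℕ) then 1 else 0

section AuxCV
@[simp] lemma cv_1_1 {α : Type*} (x : α) (u : Fin 1 → α) : Matrix.vecCons x u (1 : Fin 2) = u 0 := rfl
@[simp] lemma cv_2_1 {α : Type*} (x : α) (u : Fin 2 → α) : Matrix.vecCons x u (1 : Fin 3) = u 0 := rfl
@[simp] lemma cv_2_2 {α : Type*} (x : α) (u : Fin 2 → α) : Matrix.vecCons x u (2 : Fin 3) = u 1 := rfl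
@[simp] lemma cv_3_1 {α : Type*} (x : α) (u : Fin 3 → α) : Matrix.vecCons x u (1 : Fin 4) = u 0 := rfl
@[simp] lemma cv_3_2 {α : Type*} (x : α) (u : Fin 3 → α) : Matrix.vecCons x u (2 : Fin 4) = u 1 := rfl
@[simp] lemma cv_3_3 {α : Type*} (x : α) (u : Fin 3 → α) : Matrix.vecCons x u (3 : Fin 4) = u 2 := rfl
@[simp] lemma cv_4_1 {α : Type*} (x : α) (u : Fin 4 → α) : Matrix.vecCons x u (1 : Fin 5) = u 0 := rfl
@[simp] lemma cv_4_2 {α : Type*} (x : α) (u : Fin 4 → α) : Matrix.vecCons x u (2 : Fin 5) = u 1 := rfl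
@[simp] lemma cv_4_3 {α : Type*} (x : α) (u : Fin 4 → α) : Matrix.vecCons x u (3 : Fin 5) = u 2 := rfl
@[simp] lemma cv_4_4 {α : Type*} (x : α) (u : Fin 4 → α) : Matrix.vecCons x u (4 : Fin 5) = u 3 := rfl
@[simp] lemma cv_5_1 {α : Type*} (x : α) (u : Fin 5 → α) : Matrix.vecCons x u (1 : Fin 6) = u 0 := rfl
@[simp] lemma cv_5_2 {α : Type*} (x : α) (u : Fin 5 → α) : Matrix.vecCons x u (2 : Fin 6) = u 1 := rfl
@[simp] lemma cv_5_3 {α : Type*} (x : α) (u : Fin 5 → α) : Matrix.vecCons x u (3 : Fin 6) = u 2 := rfl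
@[simp] lemma cv_5_4 {α : Type*} (x : α) (u : Fin 5 → α) : Matrix.vecCons x u (4 : Fin 6) = u 3 := rfl
@[simp] lemma cv_5_5 {α : Type*} (x : α) (u : Fin 5 → α) : Matrix.vecCons x u (5 : Fin 6) = u 4 := rfl
@[simp] lemma fm0 (h : 0 < 6) : (⟨0, h⟩ : Fin 6) = (0 : Fin 6) := rfl
@[simp] lemma fm1 (h : 1 < 6) : (⟨1, h⟩ : Fin 6) = (1 : Fin 6) := rfl
@[simp] lemma fm2 (h : 2 < 6) : (⟨2, h⟩ : Fin 6) = (2 : Fin 6) := rfl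
@[simp] lemma fm3 (h : 3 < 6) : (⟨3, h⟩ : Fin 6) = (3 : Fin 6) := rfl
@[simp] lemma fm4 (h : 4 < 6) : (⟨4, h⟩ : Fin 6) = (4 : Fin 6) := rfl
@[simp] lemma fm5 (h : 5 < 6) : (⟨5, h⟩ : Fin 6) = (5 : Fin 6) := rfl
end AuxCV

section AuxSV
@[simp] lemma sv_0_0 : stdv 0 0 = 1 := rfl
@[simp] lemma sv_0_1 : stdv 0 1 = 0 := rfl
@[simp] lemma sv_0_2 : stdv 0 2 = 0 := rfl
@[simp] lemma sv_0_3 : stdv 0 3 = 0 := rfl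
@[simp] lemma sv_0_4 : stdv 0 4 = 0 := rfl
@[simp] lemma sv_0_5 : stdv 0 5 = 0 := rfl
@[simp] lemma sv_1_0 : stdv 1 0 = 0 := rfl
@[simp] lemma sv_1_1 : stdv 1 1 = 1 := rfl
@[simp] lemma sv_1_2 : stdv 1 2 = 0 := rfl
@[simp] lemma sv_1_3 : stdv 1 3 = 0 := rfl
@[simp] lemma sv_1_4 : stdv 1 4 = 0 := rfl
@[simp] lemma sv_1_5 : stdv 1 5 = 0 := rfl
@[simp] lemma sv_2_0 : stdv 2 0 = 0 := rfl
@[simp] lemma sv_2_1 : stdv 2 1 = 0 := rfl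
@[simp] lemma sv_2_2 : stdv 2 2 = 1 := rfl
@[simp] lemma sv_2_3 : stdv 2 3 = 0 := rfl
@[simp] lemma sv_2_4 : stdv 2 4 = 0 := rfl
@[simp] lemma sv_2_5 : stdv 2 5 = 0 := rfl
@[simp] lemma sv_3_0 : stdv 3 0 = 0 := rfl
@[simp] lemma sv_3_1 : stdv 3 1 = 0 := rfl
@[simp] lemma sv_3_2 : stdv 3 2 = 0 := rfl
@[simp] lemma sv_3_3 : stdv 3 3 = 1 := rfl
@[simp] lemma sv_3_4 : stdv 3 4 = 0 := rfl
@[simp] lemma sv_3_5 : stdv 3 5 = 0 := rfl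
@[simp] lemma sv_4_0 : stdv 4 0 = 0 := rfl
@[simp] lemma sv_4_1 : stdv 4 1 = 0 := rfl
@[simp] lemma sv_4_2 : stdv 4 2 = 0 := rfl
@[simp] lemma sv_4_3 : stdv 4 3 = 0 := rfl
@[simp] lemma sv_4_4 : stdv 4 4 = 1 := rfl
@[simp] lemma sv_4_5 : stdv 4 5 = 0 := rfl
@[simp] lemma sv_5_0 : stdv 5 0 = 0 := rfl
@[simp] lemma sv_5_1 : stdv 5 1 = 0 := rfl
@[simp] lemma sv_5_2 : stdv 5 2 = 0 := rfl
@[simp] lemma sv_5_3 : stdv 5 3 = 0 := rfl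
@[simp] lemma sv_5_4 : stdv 5 4 = 0 := rfl
@[simp] lemma sv_5_5 : stdv 5 5 = 1 := rfl
end AuxSV

lemma fv0 : ((0 : Fin 6) : ℕ) = 0 := rfl
lemma fv1 : ((1 : Fin 6) : ℕ) = 1 := rfl
lemma fv2 : ((2 : Fin 6) : ℕ) = 2 := rfl
lemma fv3 : ((3 : Fin 6) : ℕ) = 3 := rfl
lemma fv4 : ((4 : Fin 6) : ℕ) = 4 := rfl
lemma fv5 : ((5 : Fin 6) : ℕ) = 5 := rfl

/-- Explicit form of the array `η_k`. -/
def eta' (k : ℂ) : Fin 6 → Fin 6 → Fin 6 → ℂ :=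
![![![0,0,0,0,0,0], ![0,0,1,0,0,0], ![0,-1,0,0,0,0], ![0,0,0,0,0,0], ![0,0,0,0,0,0], ![0,0,0,0,0,0]],
  ![![0,0,-1,0,0,0], ![0,0,0,0,0,0], ![1,0,0,0,0,0], ![0,0,0,0,0,0], ![0,0,0,0,0,0], ![0,0,0,0,0,0]],
  ![![0,1,0,0,0,0], ![-1,0,0,0,0,0], ![0,0,0,0,0,0], ![0,0,0,0,0,0], ![0,0,0,0,0,0], ![0,0,0,0,0,0]],
  ![![0,0,0,0,0,0], ![0,0,0,0,0,0], ![0,0,0,0,0,0], ![0,0,0,0,0,0], ![0,0,0,0,0,k], ![0,0,0,0,-k,0]],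
  ![![0,0,0,0,0,0], ![0,0,0,0,0,0], ![0,0,0,0,0,0], ![0,0,0,0,0,-k], ![0,0,0,0,0,0], ![0,0,0,k,0,0]],
  ![![0,0,0,0,0,0], ![0,0,0,0,0,0], ![0,0,0,0,0,0], ![0,0,0,0,k,0], ![0,0,0,-k,0,0], ![0,0,0,0,0,0]]]

lemma W_eq : W = Matrix.of
    ![![0,0,0,-1,0,0], ![0,0,0,0,-1,0], ![0,0,0,0,0,-1],
      ![1,0,0,0,0,0], ![0,1,0,0,0,0], ![0,0,1,0,0,0]] := by
  ext i j
  fin_cases i <;> fin_cases j <;>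
    norm_num [W, J, Fin.ext_iff, Matrix.vecHead, Matrix.vecTail, fv0, fv1, fv2, fv3, fv4, fv5]

lemma Sblk_eq : Sblk = Matrix.of
    ![![0,0,0,1,0,0], ![0,0,0,0,1,0], ![0,0,0,0,0,1],
      ![1,0,0,0,0,0], ![0,1,0,0,0,0], ![0,0,1,0,0,0]] := by
  ext i j
  fin_cases i <;> fin_cases j <;>
    norm_num [Sblk, Fin.ext_iff, Matrix.vecHead, Matrix.vecTail, fv0, fv1, fv2, fv3, fv4, fv5]

set_option maxHeartbeats 4000000 in
lemma etaO_eq (k : ℂ) : etaO k = eta' k := by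
  funext i j l
  fin_cases i <;> fin_cases j <;> fin_cases l <;>
    · simp only [fm0, fm1, fm2, fm3, fm4, fm5, etaO, eta', plk, Matrix.det_fin_three,
        Matrix.of_apply, Matrix.cons_val_zero, Matrix.cons_val_one, Matrix.head_cons,
        cv_5_1, cv_5_2, cv_5_3, cv_5_4, cv_5_5, cv_4_1, cv_4_2, cv_4_3, cv_4_4,
        cv_3_1, cv_3_2, cv_3_3, cv_2_1, cv_2_2, cv_1_1,
        sv_0_0, sv_0_1, sv_0_2, sv_0_3, sv_0_4, sv_0_5, sv_1_0, sv_1_1, sv_1_2, sv_1_3, sv_1_4, sv_1_5, sv_2_0, sv_2_1, sv_2_2, sv_2_3, sv_2_4, sv_2_5, sv_3_0, sv_3_1, sv_3_2, sv_3_3, sv_3_4, sv_3_5, sv_4_0, sv_4_1, sv_4_2, sv_4_3, sv_4_4, sv_4_5, sv_5_0, sv_5_1, sv_5_2, sv_5_3, sv_5_4, sv_5_5,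
        mul_zero, zero_mul, mul_one, one_mul, add_zero, zero_add, sub_zero, zero_sub,
        neg_zero, neg_neg, sub_self]
      try ring

/-- Inner double contraction appearing in the KLR contraction. -/
def inn (η : Fin 6 → Fin 6 → Fin 6 → ℂ) (b i j : Fin 6) : ℂ :=
  ∑ h, ∑ l, η b h l * W i h * W j l

lemma klr_apply (η : Fin 6 → Fin 6 → Fin 6 → ℂ) (a b : Fin 6) :
    klr η a b = ∑ i, ∑ j, η a i j * inn η b i j := by
  simp only [klr, Matrix.of_apply, inn, Finset.mul_sum]
  refine Finset.sum_congr rfl fun i _ => Finset.sum_congr rfl fun j _ =>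
    Finset.sum_congr rfl fun h _ => Finset.sum_congr rfl fun l _ => by ring

set_option maxHeartbeats 4000000 in
lemma klr_eta' (k : ℂ) : klr (eta' k) = (2 * k) • Sblk := by
  ext a b
  rw [Matrix.smul_apply, Sblk_eq, klr_apply]
  fin_cases a <;> fin_cases b <;>
    · simp only [fm0, fm1, fm2, fm3, fm4, fm5, Fin.sum_univ_six, eta', Matrix.of_apply,
        Matrix.cons_val_zero, Matrix.cons_val_one, Matrix.head_cons,
        cv_5_1, cv_5_2, cv_5_3, cv_5_4, cv_5_5, cv_4_1, cv_4_2, cv_4_3, cv_4_4,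
        cv_3_1, cv_3_2, cv_3_3, cv_2_1, cv_2_2, cv_1_1,
        zero_mul, mul_zero, add_zero, zero_add, neg_mul, one_mul, mul_one, neg_neg, smul_eq_mul]
      simp only [inn, W_eq, Fin.sum_univ_six, eta', Matrix.of_apply,
        Matrix.cons_val_zero, Matrix.cons_val_one, Matrix.head_cons,
        cv_5_1, cv_5_2, cv_5_3, cv_5_4, cv_5_5, cv_4_1, cv_4_2, cv_4_3, cv_4_4,
        cv_3_1, cv_3_2, cv_3_3, cv_2_1, cv_2_2, cv_1_1,
        zero_mul, mul_zero, add_zero, zero_add, neg_mul, mul_neg, one_mul, mul_one, neg_neg,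
        neg_zero]
      try ring

lemma Sblk_mul_self : Sblk * Sblk = 1 := by
  rw [Sblk_eq]
  ext a b
  fin_cases a <;> fin_cases b <;>
    norm_num [Matrix.mul_apply, Fin.sum_univ_six, Matrix.one_apply, Fin.ext_iff,
      Matrix.vecHead, Matrix.vecTail, fv0, fv1, fv2, fv3, fv4, fv5]


/-- The array `η_k` with `η_k(1,2,3) = 1`, `η_k(4,5,6) = k` is effective and
`q(η_k) = 2k · [[0, I₃], [I₃, 0]]`; in particular for `k ≠ 0` the matrix `q(η_k)` has
rank `6`, and all the arrays `η_k`, `k ≠ 0`, have proportional KLR contractions: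
they constitute the fiber of the projectivized moment map through the generic
Monge–Ampère equation `det(u_{ij}) = const`. -/
theorem statement_17 :
    (∀ k : ℂ, etaO k 0 1 2 = 1 ∧ etaO k 3 4 5 = k ∧
      IsAlt (etaO k) ∧ IsEff (etaO k) ∧ klr (etaO k) = (2 * k) • Sblk) ∧
    (∀ k : ℂ, k ≠ 0 → (klr (etaO k)).rank = 6) := by
  have hmain : ∀ k : ℂ, klr (etaO k) = (2 * k) • Sblk := fun k => by
    rw [etaO_eq]; exact klr_eta' k
  constructor
  · intro k
    refine ⟨?_, ?_, ?_, ?_, hmain k⟩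
    · rw [etaO_eq]; rfl
    · rw [etaO_eq]; rfl
    · refine ⟨fun i j l => ?_, fun i j l => ?_, fun i j l => ?_⟩ <;>
        · simp only [etaO, plk, Matrix.det_fin_three, Matrix.of_apply,
            Matrix.cons_val_zero, Matrix.cons_val_one, Matrix.head_cons,
            cv_2_1, cv_2_2]
          ring
    · intro l
      simp only [etaO_eq, W_eq]
      fin_cases l <;>
        · norm_num [fm0, fm1, fm2, fm3, fm4, fm5, Fin.sum_univ_six, eta',
            Matrix.vecHead, Matrix.vecTail]
          try ring
  · intro k hk
    rw [hmain k]
    have h2k : (2 * k) ≠ 0 := by simpa using hk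
    have hdet : Sblk.det * Sblk.det = 1 := by
      rw [← Matrix.det_mul, Sblk_mul_self, Matrix.det_one]
    have hSdet : Sblk.det ≠ 0 := by
      intro h; rw [h, mul_zero] at hdet; exact zero_ne_one (α := ℂ) hdet
    have hne : ((2 * k) • Sblk).det ≠ 0 := by
      rw [Matrix.det_smul]
      exact mul_ne_zero (pow_ne_zero _ h2k) hSdet
    have hunit : IsUnit ((2 * k) • Sblk) :=
      (Matrix.isUnit_iff_isUnit_det _).mpr hne.isUnit
    simpa using Matrix.rank_of_isUnit _ hunit
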